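/- Let (μ : M → P) be a crossed module and let G = P ⋉ M be the semidirect product with multiplication (p,m)(p′,m′) = (pp′, (m^{p′}) m′). Define e : P → G, p ↦ (p, 1), and t, h : G → P by t(p,m) = p and h(p,m) = p · μ(m). Then h is a group homomorphism, t ∘ e = h ∘ e = id_P, and the commutator subgroup [ker t, ker h] is trivial; that is, (e; t, h : G → P) is a cat¹-group. -/

import Mathlib

universe u

/-- A crossed module `(μ : M → P)`: groups `M`, `P`, a (right) action of `P` on `M` by
group automorphisms, written `act m p` for `m ^ p`, and a homomorphism `μ : M →* P`
satisfying CM1: `μ (m ^ p) = p⁻¹ * μ m * p` and CM2: `n ^ (μ m) = m⁻¹ * n * m`. -/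
structure CrossedModule (M P : Type u) [Group M] [Group P] where
  μ : M →* P
  act : M → P → M
  act_mul : ∀ m n p, act (m * n) p = act m p * act n p
  act_one : ∀ m, act m 1 = m
  act_act : ∀ m p q, act (act m p) q = act m (p * q)
  cm1 : ∀ m p, μ (act m p) = p⁻¹ * μ m * p
  cm2 : ∀ m n, act n (μ m) = m⁻¹ * n * m

lemma act_one_left {M P : Type u} [Group M] [Group P] (X : CrossedModule M P) (p : P) :
    X.act 1 p = 1 := by
  have h := X.act_mul 1 1 p
  rw [mul_one] at h
  exact right_eq_mul.mp h

/-- Let `(μ : M → P)` be a crossed module and let `G = P ⋉ M` be the semidirect product with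
multiplication `(p,m)(p',m') = (pp', (m ^ p') m')`; here `G` is any group whose elements are
pairs `pair p m` (bijectively) multiplying by that rule.  Define `e p = pair p 1`,
`t (pair p m) = p` and `h (pair p m) = p * μ m`.  Then `e`, `t`, `h` are group homomorphisms,
`t ∘ e = h ∘ e = id`, and `[ker t, ker h]` is trivial: `(e; t, h : G → P)` is a cat¹-group. -/
theorem semidirect_product_is_cat1 {M P : Type u} [Group M] [Group P] (X : CrossedModule M P)
    (G : Type u) [Group G] (pair : P → M → G)
    (hbij : Function.Bijective fun pm : P × M => pair pm.1 pm.2)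
    (hmul : ∀ (p p' : P) (m m' : M),
      pair p m * pair p' m' = pair (p * p') (X.act m p' * m'))
    (t h : G → P)
    (ht : ∀ p m, t (pair p m) = p)
    (hh : ∀ p m, h (pair p m) = p * X.μ m) :
    (∀ a b : G, t (a * b) = t a * t b) ∧
    (∀ a b : G, h (a * b) = h a * h b) ∧
    (∀ p q : P, pair (p * q) 1 = pair p 1 * pair q 1) ∧
    (∀ p : P, t (pair p 1) = p ∧ h (pair p 1) = p) ∧
    (∀ a b : G, t a = 1 → h b = 1 → a * b = b * a) := by
  have surj : ∀ a : G, ∃ p m, a = pair p m := by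
    intro a
    obtain ⟨⟨p, m⟩, hpm⟩ := hbij.2 a
    exact ⟨p, m, hpm.symm⟩
  refine ⟨?_, ?_, ?_, ?_, ?_⟩
  · intro a b
    obtain ⟨p, m, rfl⟩ := surj a
    obtain ⟨q, n, rfl⟩ := surj b
    rw [hmul, ht, ht, ht]
  · intro a b
    obtain ⟨p, m, rfl⟩ := surj a
    obtain ⟨q, n, rfl⟩ := surj b
    rw [hmul, hh, hh, hh, map_mul, X.cm1]
    group
  · intro p q
    rw [hmul, act_one_left, one_mul]
  · intro p
    exact ⟨ht p 1, by rw [hh, map_one, mul_one]⟩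
  · intro a b hta hhb
    obtain ⟨p, m, rfl⟩ := surj a
    obtain ⟨q, n, rfl⟩ := surj b
    rw [ht] at hta; subst hta
    rw [hh] at hhb
    have hq : q = (X.μ n)⁻¹ := by
      exact eq_inv_of_mul_eq_one_left hhb
    subst hq
    rw [hmul, hmul, one_mul, mul_one, X.act_one]
    congr 1
    have key : X.act (n * m * n⁻¹) (X.μ n) = m := by
      rw [X.cm2]; group
    have h2 : X.act m (X.μ n)⁻¹ = n * m * n⁻¹ := by
      calc X.act m (X.μ n)⁻¹ = X.act (X.act (n * m * n⁻¹) (X.μ n)) (X.μ n)⁻¹ := by rw [key]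
        _ = n * m * n⁻¹ := by rw [X.act_act, mul_inv_cancel, X.act_one]
    rw [h2]; group
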